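/- Suppose N = 2φ*(N), N has at most 7 distinct prime factors, and N ∉ {1, 2, 6, 12, 168, 240}. Then 3 exactly divides N (i.e., 3 | N but 9 ∤ N). -/

import Mathlib

/-- The unitary totient function: φ*(n) = ∏_{p^e || n} (p^e - 1). -/
def uphi (n : ℕ) : ℕ := ∏ p ∈ n.primeFactors, (p ^ n.factorization p - 1)

/- ### Auxiliary machinery -/

def Allowed (d : ℕ) : Prop := 4 ≤ d ∧ d % 2 = 0 ∧ d % 3 ≠ 2

def na (m : ℕ) : ℕ :=
  if m ≤ 4 then 4
  else if m % 6 = 0 ∨ m % 6 = 4 then m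
  else if m % 6 = 5 then m + 1
  else m + 4 - m % 6

def bnd : ℕ → ℕ → ℚ
  | 0, _ => 1
  | (k+1), m => (1 + 1/(na m : ℚ)) * bnd k (na m + 1)

lemma na_ge4 (m : ℕ) : 4 ≤ na m := by unfold na; split_ifs <;> omega

lemma na_allowed (m : ℕ) : Allowed (na m) ∧ m ≤ na m := by
  unfold na Allowed; split_ifs <;> omega

lemma na_le {d m : ℕ} (hd : Allowed d) (hmd : m ≤ d) : na m ≤ d := by
  obtain ⟨h1, h2, h3⟩ := hd; unfold na; split_ifs <;> omega

lemma na_mono {m m' : ℕ} (h : m ≤ m') : na m ≤ na m' :=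
  na_le (na_allowed m').1 (le_trans h (na_allowed m').2)

lemma na_pos (m : ℕ) : (0:ℚ) < (na m : ℚ) := by
  have := na_ge4 m
  exact_mod_cast Nat.lt_of_lt_of_le (by norm_num) this

lemma bnd_one_le (k m : ℕ) : 1 ≤ bnd k m := by
  induction k generalizing m with
  | zero => simp [bnd]
  | succ k ih =>
    rw [bnd]
    have h1 : (1:ℚ) ≤ 1 + 1/(na m : ℚ) := by
      have := na_pos m
      have : (0:ℚ) < 1/(na m:ℚ) := by positivity
      linarith
    nlinarith [ih (na m + 1)]

lemma bnd_anti (k : ℕ) {m m' : ℕ} (h : m ≤ m') : bnd k m' ≤ bnd k m := by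
  induction k generalizing m m' with
  | zero => simp [bnd]
  | succ k ih =>
    rw [bnd, bnd]
    have hna := na_mono h
    have hp := na_pos m
    have hp' := na_pos m'
    have h1 : 1/(na m' : ℚ) ≤ 1/(na m : ℚ) := by
      apply one_div_le_one_div_of_le hp; exact_mod_cast hna
    have h2 : bnd k (na m' + 1) ≤ bnd k (na m + 1) := ih (by omega)
    have h3 : (1:ℚ) ≤ bnd k (na m' + 1) := bnd_one_le _ _
    have h4 : (0:ℚ) ≤ 1/(na m : ℚ) := by positivity
    apply mul_le_mul (by linarith) h2 (by linarith) (by linarith)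

lemma KB {k : ℕ} : ∀ (D : Finset ℕ) (m : ℕ), D.card = k →
    (∀ d ∈ D, Allowed d) → (∀ d ∈ D, m ≤ d) →
    (∏ d ∈ D, (1 + 1/(d:ℚ))) ≤ bnd k m := by
  induction k with
  | zero =>
    intro D m hc _ _
    rw [Finset.card_eq_zero] at hc; subst hc; simp [bnd]
  | succ k ih =>
    intro D m hc hall hge
    have hne : D.Nonempty := Finset.card_pos.mp (by omega)
    set d0 := D.min' hne with hd0
    have hd0D : d0 ∈ D := D.min'_mem hne
    have hd0a : Allowed d0 := hall _ hd0D
    have hd0m : m ≤ d0 := hge _ hd0D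
    have hd0pos : (0:ℚ) < (d0:ℚ) := by
      have := hd0a.1
      exact_mod_cast Nat.lt_of_lt_of_le (by norm_num) this
    have hsplit : ∏ d ∈ D, (1 + 1/(d:ℚ)) =
        (1 + 1/(d0:ℚ)) * ∏ d ∈ D.erase d0, (1 + 1/(d:ℚ)) :=
      (Finset.mul_prod_erase D _ hd0D).symm
    rw [hsplit, bnd]
    have hcard' : (D.erase d0).card = k := by
      rw [Finset.card_erase_of_mem hd0D, hc]; omega
    have hrest : ∏ d ∈ D.erase d0, (1 + 1/(d:ℚ)) ≤ bnd k (d0 + 1) := by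
      apply ih _ _ hcard' (fun d hd => hall d (Finset.mem_erase.mp hd).2)
      intro d hd
      have h1 := (Finset.mem_erase.mp hd).1
      have h2 := D.min'_le d (Finset.mem_erase.mp hd).2
      omega
    have hrest2 : bnd k (d0+1) ≤ bnd k (na m + 1) :=
      bnd_anti k (by have := na_le hd0a hd0m; omega)
    have hf : (1 + 1/(d0:ℚ)) ≤ 1 + 1/(na m:ℚ) := by
      have h1 : 1/(d0:ℚ) ≤ 1/(na m:ℚ) := by
        apply one_div_le_one_div_of_le (na_pos m); exact_mod_cast na_le hd0a hd0m
      linarith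
    have hnn : (0:ℚ) ≤ ∏ d ∈ D.erase d0, (1 + 1/(d:ℚ)) := by
      apply Finset.prod_nonneg; intro d hd; positivity
    have hb1 : (1:ℚ) ≤ bnd k (na m + 1) := bnd_one_le _ _
    have h5 : (0:ℚ) ≤ 1/(d0 : ℚ) := by positivity
    exact mul_le_mul hf (le_trans hrest hrest2) hnn (by linarith)

lemma fact2_odd {u : ℕ} (hu : u % 2 = 1) : u.factorization 2 = 0 :=
  Nat.factorization_eq_zero_of_not_dvd (by omega)

lemma fact2_pow_mul {v u : ℕ} (hu : u % 2 = 1) : (2^v * u).factorization 2 = v := by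
  rw [Nat.factorization_mul (by positivity) (by omega)]
  simp [Nat.Prime.factorization_pow, Nat.Prime.factorization_self Nat.prime_two,
    fact2_odd hu]

lemma fact2_pos {d : ℕ} (h2 : d % 2 = 0) (h0 : d ≠ 0) : 1 ≤ d.factorization 2 := by
  have := Nat.Prime.factorization_pos_of_dvd Nat.prime_two h0 (by omega)
  omega

lemma cardleV (X : Finset ℕ) (hall : ∀ d ∈ X, Allowed d) :
    X.card ≤ ∑ d ∈ X, d.factorization 2 := by
  calc X.card = ∑ _d ∈ X, 1 := by simp
  _ ≤ _ := Finset.sum_le_sum fun d hd =>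
      fact2_pos (hall d hd).2.1 (by have := (hall d hd).1; omega)

lemma ratioB (A M P1 P0 : ℕ) (hA : 2 ≤ A) (hM : 2 ≤ M) (hP0 : 0 < P0)
    (h : A * (M * P1) = 2 * ((A-1) * ((M-1) * P0))) :
    ((M:ℚ)/((M:ℚ)-1)) * ((P1:ℚ)/(P0:ℚ)) = 2 - 2/(A:ℚ) := by
  have hA1 : (1:ℚ) ≤ (A:ℚ) := by exact_mod_cast by omega
  have hM1 : (1:ℚ) < (M:ℚ) := by exact_mod_cast by omega
  have hP0' : (0:ℚ) < (P0:ℚ) := by exact_mod_cast hP0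
  have hAq : (0:ℚ) < (A:ℚ) := by linarith
  have hcast : (A:ℚ) * ((M:ℚ) * (P1:ℚ)) = 2 * (((A:ℚ)-1) * (((M:ℚ)-1) * (P0:ℚ))) := by
    have := congrArg (fun n : ℕ => (n:ℚ)) h
    push_cast [Nat.cast_sub (by omega : 1 ≤ A), Nat.cast_sub (by omega : 1 ≤ M)] at this
    convert this using 2 <;> push_cast <;> ring_nf
  rw [div_mul_div_comm, div_eq_iff (ne_of_gt (by nlinarith) : ((M:ℚ)-1) * (P0:ℚ) ≠ 0)]
  have hx : (2 - 2/(A:ℚ)) * (((M:ℚ)-1) * (P0:ℚ)) * (A:ℚ) = (2*(A:ℚ)-2) * (((M:ℚ)-1) * (P0:ℚ)) := by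
    field_simp
  have goal : ((M:ℚ) * (P1:ℚ)) * (A:ℚ) = (2 - 2/(A:ℚ)) * (((M:ℚ)-1) * (P0:ℚ)) * (A:ℚ) := by
    rw [hx]; linear_combination hcast
  exact mul_right_cancel₀ (ne_of_gt hAq) goal

lemma ratioA (A P1 P0 : ℕ) (hA : 2 ≤ A) (hP0 : 0 < P0)
    (h : A * P1 = 2 * ((A-1) * P0)) :
    (P1:ℚ)/(P0:ℚ) = 2 - 2/(A:ℚ) := by
  have hA1 : (1:ℚ) ≤ (A:ℚ) := by exact_mod_cast by omega
  have hP0' : (0:ℚ) < (P0:ℚ) := by exact_mod_cast hP0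
  have hAq : (0:ℚ) < (A:ℚ) := by linarith
  have hcast : (A:ℚ) * (P1:ℚ) = 2 * (((A:ℚ)-1) * (P0:ℚ)) := by
    have := congrArg (fun n : ℕ => (n:ℚ)) h
    push_cast [Nat.cast_sub (by omega : 1 ≤ A)] at this
    convert this using 2 <;> push_cast <;> ring_nf
  rw [div_eq_iff (ne_of_gt hP0')]
  have hx : (2 - 2/(A:ℚ)) * (P0:ℚ) * (A:ℚ) = (2*(A:ℚ)-2) * (P0:ℚ) := by
    field_simp
  have goal : (P1:ℚ) * (A:ℚ) = (2 - 2/(A:ℚ)) * (P0:ℚ) * (A:ℚ) := by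
    rw [hx]; linear_combination hcast
  exact mul_right_cancel₀ (ne_of_gt hAq) goal

lemma Qeq (D : Finset ℕ) (hall : ∀ d ∈ D, 1 ≤ d) :
    ∏ d ∈ D, (1 + 1/(d:ℚ)) = (((∏ d ∈ D, (d+1)) : ℕ) : ℚ) / (((∏ d ∈ D, d) : ℕ) : ℚ) := by
  push_cast
  rw [← Finset.prod_div_distrib]
  apply Finset.prod_congr rfl
  intro d hd
  have : (d:ℚ) ≠ 0 := by
    have := hall d hd; exact_mod_cast by omega
  field_simp

lemma Qnonneg (D : Finset ℕ) : (0:ℚ) ≤ ∏ d ∈ D, (1 + 1/(d:ℚ)) :=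
  Finset.prod_nonneg fun d _ => by positivity

lemma target_mono {a b : ℕ} (h : b ≤ a) : (2:ℚ) - 2/2^b ≤ 2 - 2/2^a := by
  have h0 : (2:ℚ)^b ≤ 2^a := by
    apply pow_le_pow_right₀ (by norm_num) h
  have h1 : (0:ℚ) < 2^b := by positivity
  have h2 : (0:ℚ) < 2^a := by positivity
  have h3 : (2:ℚ)/2^a ≤ 2/2^b := by
    apply div_le_div_of_nonneg_left (by norm_num) h1 h0
  linarith

lemma chain_step (X : Finset ℕ) (hne : X.Nonempty) :
    ∃ (d0 : ℕ) (X' : Finset ℕ), d0 ∈ X ∧ X'.card + 1 = X.card ∧ (∀ d ∈ X, d0 ≤ d) ∧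
      (∀ d ∈ X', d0 + 1 ≤ d) ∧ (∀ d ∈ X', d ∈ X) ∧
      (∏ d ∈ X, (1 + 1/(d:ℚ))) = (1 + 1/(d0:ℚ)) * ∏ d ∈ X', (1 + 1/(d:ℚ)) ∧
      (∑ d ∈ X, d.factorization 2) = d0.factorization 2 + ∑ d ∈ X', d.factorization 2 := by
  set d0 := X.min' hne with hd0def
  have hd0X : d0 ∈ X := X.min'_mem hne
  refine ⟨d0, X.erase d0, hd0X, ?_, fun d hd => X.min'_le d hd, ?_, ?_, ?_, ?_⟩
  · rw [Finset.card_erase_of_mem hd0X]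
    have : 1 ≤ X.card := Finset.card_pos.mpr hne
    omega
  · intro d hd
    have h1 := (Finset.mem_erase.mp hd).1
    have h2 := X.min'_le d (Finset.mem_erase.mp hd).2
    omega
  · exact fun d hd => (Finset.mem_erase.mp hd).2
  · exact (Finset.mul_prod_erase X _ hd0X).symm
  · exact (Finset.add_sum_erase X _ hd0X).symm


lemma bridge (T : Finset ℕ) (F : ℕ → ℕ)
    (hT : ∀ p ∈ T, p.Prime ∧ p ≠ 2 ∧ p ≠ 3 ∧ 1 ≤ F p) :
    ∃ D : Finset ℕ, D.card = T.card ∧ (∀ d ∈ D, Allowed d) ∧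
      (∏ p ∈ T, p ^ F p) = ∏ d ∈ D, (d+1) ∧
      (∏ p ∈ T, (p ^ F p - 1)) = ∏ d ∈ D, d ∧
      (∑ p ∈ T, (p ^ F p - 1).factorization 2) = ∑ d ∈ D, d.factorization 2 := by
  have hfacts : ∀ p ∈ T, 5 ≤ p ^ F p ∧ (p ^ F p) % 2 = 1 ∧ (p ^ F p) % 3 ≠ 0 := by
    intro p hp
    obtain ⟨hpr, hp2, hp3, hF⟩ := hT p hp
    have hp5 : 5 ≤ p := by
      have h2 := hpr.two_le
      by_contra h
      interval_cases p
      · exact hp2 rfl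
      · exact hp3 rfl
      · exact (by norm_num : ¬ Nat.Prime 4) hpr
    have hq5 : 5 ≤ p ^ F p := le_trans hp5 (Nat.le_self_pow (by omega) p)
    refine ⟨hq5, ?_, ?_⟩
    · have hodd : Odd p := hpr.odd_of_ne_two hp2
      have : (p ^ F p) % 2 = 1 := Nat.odd_iff.mp hodd.pow
      omega
    · intro h3
      have h3d : (3:ℕ) ∣ p ^ F p := by omega
      have := Nat.Prime.dvd_of_dvd_pow Nat.prime_three h3d
      have := (Nat.prime_dvd_prime_iff_eq Nat.prime_three hpr).mp this
      exact hp3 this.symm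
  have hinj : Set.InjOn (fun p => p ^ F p - 1) T := by
    intro p hp r hr h
    simp only at h
    have h5p := (hfacts p hp).1
    have h5r := (hfacts r hr).1
    have hq : p ^ F p = r ^ F r := by omega
    have hpr' := (hT p hp).1
    have hrr := (hT r hr).1
    have hdvd : p ∣ r ^ F r := hq ▸ dvd_pow_self p (by have := (hT p hp).2.2.2; omega)
    exact (Nat.prime_dvd_prime_iff_eq hpr' hrr).mp (hpr'.dvd_of_dvd_pow hdvd)
  refine ⟨T.image (fun p => p ^ F p - 1), Finset.card_image_of_injOn hinj, ?_, ?_, ?_, ?_⟩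
  · intro d hd
    obtain ⟨p, hp, rfl⟩ := Finset.mem_image.mp hd
    obtain ⟨h1, h2, h3⟩ := hfacts p hp
    refine ⟨by omega, by omega, by omega⟩
  · rw [Finset.prod_image (fun p hp r hr h => hinj hp hr h)]
    apply Finset.prod_congr rfl
    intro p hp
    have := (hfacts p hp).1
    omega
  · rw [Finset.prod_image (fun p hp r hr h => hinj hp hr h)]
  · rw [Finset.sum_image (fun p hp r hr h => hinj hp hr h)]

/- ### Scenario A : 3 ∤ N -/

lemma scenarioA (D : Finset ℕ) (a : ℕ)
    (hk : D.card ≤ 6) (hk1 : 1 ≤ D.card)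
    (hall : ∀ d ∈ D, Allowed d)
    (ha : a = 1 + ∑ d ∈ D, d.factorization 2)
    (hEq : 2^a * ∏ d ∈ D, (d+1) = 2 * ((2^a - 1) * ∏ d ∈ D, d)) : False := by
  have hP0 : 0 < ∏ d ∈ D, d :=
    Finset.prod_pos fun d hd => by have := (hall d hd).1; omega
  have hA2 : 2 ≤ 2^a := by
    have : 1 ≤ a := by omega
    calc 2 = 2^1 := rfl
    _ ≤ 2^a := Nat.pow_le_pow_right (by norm_num) this
  have hP := ratioA (2^a) _ _ hA2 hP0 hEq
  rw [← Qeq D (fun d hd => by have := (hall d hd).1; omega)] at hP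
  push_cast at hP
  have hV : D.card ≤ ∑ d ∈ D, d.factorization 2 := by
    calc D.card = ∑ _d ∈ D, 1 := by simp
    _ ≤ _ := Finset.sum_le_sum fun d hd =>
        fact2_pos (hall d hd).2.1 (by have := (hall d hd).1; omega)
  have hamin : 1 + D.card ≤ a := by omega
  have hub := KB D 4 rfl hall (fun d hd => (hall d hd).1)
  have hkey : (2:ℚ) - 2/2^(1 + D.card) ≤ bnd D.card 4 := by
    calc (2:ℚ) - 2/2^(1 + D.card) ≤ 2 - 2/2^a := target_mono hamin
    _ = ∏ d ∈ D, (1 + 1/(d:ℚ)) := hP.symm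
    _ ≤ bnd D.card 4 := hub
  obtain ⟨k, hkk⟩ : ∃ k, D.card = k := ⟨_, rfl⟩
  rw [hkk] at hkey hk hk1
  interval_cases k <;> norm_num [bnd, na] at hkey

/- ### Scenario B : 9 ∣ N -/

lemma scenarioB (D : Finset ℕ) (a e : ℕ) (he : 2 ≤ e) (hk : D.card ≤ 5)
    (hall : ∀ d ∈ D, Allowed d)
    (ha : a = 1 + ((3^e - 1).factorization 2 + ∑ d ∈ D, d.factorization 2))
    (hEq : 2^a * (3^e * ∏ d ∈ D, (d+1)) =
      2 * ((2^a - 1) * ((3^e - 1) * ∏ d ∈ D, d))) : False := by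
  have hM9 : 9 ≤ 3^e := by
    calc 9 = 3^2 := rfl
    _ ≤ 3^e := Nat.pow_le_pow_right (by norm_num) he
  have hP0 : 0 < ∏ d ∈ D, d :=
    Finset.prod_pos fun d hd => by have := (hall d hd).1; omega
  have hA2 : 2 ≤ 2^a := by
    have : 1 ≤ a := by omega
    calc 2 = 2^1 := rfl
    _ ≤ 2^a := Nat.pow_le_pow_right (by norm_num) this
  have hP := ratioB (2^a) (3^e) (∏ d ∈ D, (d+1)) (∏ d ∈ D, d) hA2 (by omega) hP0 hEq
  rw [← Qeq D (fun d hd => by have := (hall d hd).1; omega)] at hP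
  push_cast at hP
  -- hP : (3^e)/(3^e - 1) * ∏ (1+1/d) = 2 - 2/2^a  (over ℚ)
  have hV : D.card ≤ ∑ d ∈ D, d.factorization 2 := by
    calc D.card = ∑ _d ∈ D, 1 := by simp
    _ ≤ _ := Finset.sum_le_sum fun d hd =>
        fact2_pos (hall d hd).2.1 (by have := (hall d hd).1; omega)
  have hub := KB D 4 rfl hall (fun d hd => (hall d hd).1)
  have hQnn := Qnonneg D
  have hMq : (9:ℚ) ≤ (3:ℚ)^e := by exact_mod_cast hM9
  have hf3nn : (0:ℚ) ≤ (3:ℚ)^e / ((3:ℚ)^e - 1) :=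
    div_nonneg (by positivity) (by linarith)
  rcases Nat.even_or_odd e with heven | hodd
  · -- e even : v₂(3^e - 1) ≥ 3
    obtain ⟨j, hj⟩ := heven
    have h8 : 3^e % 8 = 1 := by
      have h9j : (9:ℕ)^j % 8 = 1 := by
        rw [Nat.pow_mod]; norm_num
      have : (3:ℕ)^e = 9^j := by
        rw [hj, ← two_mul, pow_mul]; norm_num
      omega
    have hw3 : 3 ≤ (3^e - 1).factorization 2 := by
      rw [← Nat.Prime.pow_dvd_iff_le_factorization Nat.prime_two (by omega)]
      omega
    by_cases he4 : 4 ≤ e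
    · -- e even ≥ 4 : f3 ≤ 81/80, a ≥ 4 + k
      have hM81 : (81:ℚ) ≤ (3:ℚ)^e := by
        have : (81:ℕ) ≤ 3^e := by
          calc (81:ℕ) = 3^4 := rfl
          _ ≤ 3^e := Nat.pow_le_pow_right (by norm_num) he4
        exact_mod_cast this
      have hf3 : (3:ℚ)^e / ((3:ℚ)^e - 1) ≤ 81/80 := by
        rw [div_le_div_iff₀ (by linarith) (by norm_num)]
        nlinarith
      have hamin : 4 + D.card ≤ a := by omega
      have hkey : (2:ℚ) - 2/2^(4 + D.card) ≤ (81/80) * bnd D.card 4 := by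
        calc (2:ℚ) - 2/2^(4 + D.card) ≤ 2 - 2/2^a := target_mono hamin
        _ = (3:ℚ)^e / ((3:ℚ)^e - 1) * ∏ d ∈ D, (1 + 1/(d:ℚ)) := hP.symm
        _ ≤ (81/80) * bnd D.card 4 :=
          mul_le_mul hf3 hub hQnn (by norm_num)
      obtain ⟨k, hkk⟩ : ∃ k, D.card = k := ⟨_, rfl⟩
      rw [hkk] at hkey hk
      interval_cases k <;> norm_num [bnd, na] at hkey
    · -- e = 2 : the hard case
      have he2 : e = 2 := by omega
      subst he2
      have hw : (3^2 - 1 : ℕ).factorization 2 = 3 := by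
        norm_num
        rw [(by norm_num : (8:ℕ) = 2^3*1), fact2_pow_mul (by norm_num)]
      rw [hw] at ha
      have hf3v : ((3:ℚ)^2) / ((3:ℚ)^2 - 1) = 9/8 := by norm_num
      rw [hf3v] at hP
      -- now : hP : 9/8 * Q D = 2 - 2/2^a,  a = 4 + V
      by_cases hk5 : D.card = 5
      · -- the chain : D.card = 5
        have hne0 : D.Nonempty := Finset.card_pos.mp (by omega)
        obtain ⟨d1, X1, hd1D, hcard1, hmin0, hgt1, hsub1, hQ1, hS1⟩ := chain_step D hne0
        have hall1 : ∀ d ∈ X1, Allowed d := fun d hd => hall d (hsub1 d hd)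
        have hV1 := cardleV X1 hall1
        have hX1c : X1.card = 4 := by omega
        by_cases hc1 : 6 ≤ d1
        · have hge : ∀ d ∈ D, 6 ≤ d := fun d hd => le_trans hc1 (hmin0 d hd)
          have hub6 := KB D 6 hk5 hall hge
          have hkey : (2:ℚ) - 2/2^9 ≤ (9/8) * bnd 5 6 := by
            calc (2:ℚ) - 2/2^9 ≤ 2 - 2/2^a := target_mono (by omega)
            _ = 9/8 * ∏ d ∈ D, (1 + 1/(d:ℚ)) := hP.symm
            _ ≤ (9/8) * bnd 5 6 := by gcongr
          norm_num [bnd, na] at hkey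
        have hd1v : d1 = 4 := by
          obtain ⟨x1, x2, x3⟩ := hall d1 hd1D; omega
        subst hd1v
        have hf4 : (4:ℕ).factorization 2 = 2 := by
          rw [show (4:ℕ) = 2^2*1 by norm_num]; exact fact2_pow_mul (by norm_num)
        obtain ⟨d2, X2, hd2X, hcard2, hmin1, hgt2, hsub2, hQ2, hS2⟩ :=
          chain_step X1 (Finset.card_pos.mp (by omega))
        have hall2 : ∀ d ∈ X2, Allowed d := fun d hd => hall1 d (hsub2 d hd)
        have hV2 := cardleV X2 hall2
        have hX2c : X2.card = 3 := by omega
        by_cases hc2 : 7 ≤ d2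
        · have hge : ∀ d ∈ X1, 7 ≤ d := fun d hd => le_trans hc2 (hmin1 d hd)
          have hub7 := KB X1 7 hX1c hall1 hge
          have hkey : (2:ℚ) - 2/2^10 ≤ (9/8) * ((1+1/((4:ℕ):ℚ)) * bnd 4 7) := by
            calc (2:ℚ) - 2/2^10 ≤ 2 - 2/2^a := target_mono (by omega)
            _ = 9/8 * ∏ d ∈ D, (1 + 1/(d:ℚ)) := hP.symm
            _ = 9/8 * ((1+1/((4:ℕ):ℚ)) * ∏ d ∈ X1, (1 + 1/(d:ℚ))) := by rw [hQ1]
            _ ≤ (9/8) * ((1+1/((4:ℕ):ℚ)) * bnd 4 7) := by gcongr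
          norm_num [bnd, na] at hkey
        have hd2v : d2 = 6 := by
          have h5 := hgt1 d2 hd2X
          obtain ⟨x1, x2, x3⟩ := hall1 d2 hd2X; omega
        subst hd2v
        have hf6 : (6:ℕ).factorization 2 = 1 := by
          rw [show (6:ℕ) = 2^1*3 by norm_num]; exact fact2_pow_mul (by norm_num)
        obtain ⟨d3, X3, hd3X, hcard3, hmin2, hgt3, hsub3, hQ3, hS3⟩ :=
          chain_step X2 (Finset.card_pos.mp (by omega))
        have hall3 : ∀ d ∈ X3, Allowed d := fun d hd => hall2 d (hsub3 d hd)
        have hV3 := cardleV X3 hall3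
        have hX3c : X3.card = 2 := by omega
        have hd3ge : 7 ≤ d3 := hgt2 d3 hd3X
        by_cases hc3 : 13 ≤ d3
        · have hge : ∀ d ∈ X2, 13 ≤ d := fun d hd => le_trans hc3 (hmin2 d hd)
          have hub13 := KB X2 13 hX2c hall2 hge
          have hkey : (2:ℚ) - 2/2^10 ≤
              (9/8) * ((1+1/((4:ℕ):ℚ)) * ((1+1/((6:ℕ):ℚ)) * bnd 3 13)) := by
            calc (2:ℚ) - 2/2^10 ≤ 2 - 2/2^a := target_mono (by omega)
            _ = 9/8 * ∏ d ∈ D, (1 + 1/(d:ℚ)) := hP.symm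
            _ = 9/8 * ((1+1/((4:ℕ):ℚ)) * ((1+1/((6:ℕ):ℚ)) * ∏ d ∈ X2, (1 + 1/(d:ℚ)))) := by
              rw [hQ1, hQ2]
            _ ≤ _ := by gcongr
          norm_num [bnd, na] at hkey
        have hd3v : d3 = 12 ∨ d3 = 10 := by
          obtain ⟨x1, x2, x3⟩ := hall2 d3 hd3X; omega
        rcases hd3v with rfl | rfl
        · -- d3 = 12 : kill
          have hf12 : (12:ℕ).factorization 2 = 2 := by
            rw [show (12:ℕ) = 2^2*3 by norm_num]; exact fact2_pow_mul (by norm_num)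
          have hge : ∀ d ∈ X3, 13 ≤ d := fun d hd => hgt3 d hd
          have hub := KB X3 13 hX3c hall3 hge
          have hkey : (2:ℚ) - 2/2^11 ≤
              (9/8) * ((1+1/((4:ℕ):ℚ)) * ((1+1/((6:ℕ):ℚ)) * ((1+1/((12:ℕ):ℚ)) * bnd 2 13))) := by
            calc (2:ℚ) - 2/2^11 ≤ 2 - 2/2^a := target_mono (by omega)
            _ = 9/8 * ∏ d ∈ D, (1 + 1/(d:ℚ)) := hP.symm
            _ = 9/8 * ((1+1/((4:ℕ):ℚ)) * ((1+1/((6:ℕ):ℚ)) * ((1+1/((12:ℕ):ℚ)) *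
                ∏ d ∈ X3, (1 + 1/(d:ℚ))))) := by rw [hQ1, hQ2, hQ3]
            _ ≤ _ := by gcongr
          norm_num [bnd, na] at hkey
        -- d3 = 10
        have hf10 : (10:ℕ).factorization 2 = 1 := by
          rw [show (10:ℕ) = 2^1*5 by norm_num]; exact fact2_pow_mul (by norm_num)
        obtain ⟨d4, X4, hd4X, hcard4, hmin3, hgt4, hsub4, hQ4, hS4⟩ :=
          chain_step X3 (Finset.card_pos.mp (by omega))
        have hall4 : ∀ d ∈ X4, Allowed d := fun d hd => hall3 d (hsub4 d hd)
        have hV4 := cardleV X4 hall4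
        have hX4c : X4.card = 1 := by omega
        have hd4ge : 11 ≤ d4 := hgt3 d4 hd4X
        by_cases hc4 : 17 ≤ d4
        · have hge : ∀ d ∈ X3, 17 ≤ d := fun d hd => le_trans hc4 (hmin3 d hd)
          have hub17 := KB X3 17 hX3c hall3 hge
          have hkey : (2:ℚ) - 2/2^10 ≤
              (9/8) * ((1+1/((4:ℕ):ℚ)) * ((1+1/((6:ℕ):ℚ)) * ((1+1/((10:ℕ):ℚ)) * bnd 2 17))) := by
            calc (2:ℚ) - 2/2^10 ≤ 2 - 2/2^a := target_mono (by omega)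
            _ = 9/8 * ∏ d ∈ D, (1 + 1/(d:ℚ)) := hP.symm
            _ = 9/8 * ((1+1/((4:ℕ):ℚ)) * ((1+1/((6:ℕ):ℚ)) * ((1+1/((10:ℕ):ℚ)) *
                ∏ d ∈ X3, (1 + 1/(d:ℚ))))) := by rw [hQ1, hQ2, hQ3]
            _ ≤ _ := by gcongr
          norm_num [bnd, na] at hkey
        have hd4v : d4 = 16 ∨ d4 = 12 := by
          obtain ⟨x1, x2, x3⟩ := hall3 d4 hd4X; omega
        obtain ⟨d5, X5, hd5X, hcard5, hmin4, hgt5, hsub5, hQ5, hS5⟩ :=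
          chain_step X4 (Finset.card_pos.mp (by omega))
        have hX5e : X5 = ∅ := Finset.card_eq_zero.mp (by omega)
        rw [hX5e, Finset.sum_empty] at hS5
        have hd5a := hall4 d5 hd5X
        rcases hd4v with rfl | rfl
        · -- d4 = 16
          have hf16 : (16:ℕ).factorization 2 = 4 := by
            rw [show (16:ℕ) = 2^4*1 by norm_num]; exact fact2_pow_mul (by norm_num)
          have hd5ge : 17 ≤ d5 := hgt4 d5 hd5X
          by_cases hc5 : 24 ≤ d5
          · have hge : ∀ d ∈ X4, 24 ≤ d := fun d hd => le_trans hc5 (hmin4 d hd)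
            have hub24 := KB X4 24 hX4c hall4 hge
            have hkey : (2:ℚ) - 2/2^13 ≤
                (9/8) * ((1+1/((4:ℕ):ℚ)) * ((1+1/((6:ℕ):ℚ)) * ((1+1/((10:ℕ):ℚ)) *
                  ((1+1/((16:ℕ):ℚ)) * bnd 1 24)))) := by
              calc (2:ℚ) - 2/2^13 ≤ 2 - 2/2^a := target_mono (by omega)
              _ = 9/8 * ∏ d ∈ D, (1 + 1/(d:ℚ)) := hP.symm
              _ = 9/8 * ((1+1/((4:ℕ):ℚ)) * ((1+1/((6:ℕ):ℚ)) * ((1+1/((10:ℕ):ℚ)) *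
                  ((1+1/((16:ℕ):ℚ)) * ∏ d ∈ X4, (1 + 1/(d:ℚ)))))) := by
                rw [hQ1, hQ2, hQ3, hQ4]
              _ ≤ _ := by gcongr
            norm_num [bnd, na] at hkey
          have hd5v : d5 = 18 ∨ d5 = 22 := by
            obtain ⟨x1, x2, x3⟩ := hall4 d5 hd5X
            omega
          rcases hd5v with rfl|rfl
          · have hfd5 : (18:ℕ).factorization 2 = 1 := by
              rw [show (18:ℕ) = 2^1*9 by norm_num]; exact fact2_pow_mul (by norm_num)
            have hav : a = 13 := by omega
            rw [hav, hQ1, hQ2, hQ3, hQ4, hQ5, hX5e, Finset.prod_empty] at hP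
            norm_num at hP
          · have hfd5 : (22:ℕ).factorization 2 = 1 := by
              rw [show (22:ℕ) = 2^1*11 by norm_num]; exact fact2_pow_mul (by norm_num)
            have hav : a = 13 := by omega
            rw [hav, hQ1, hQ2, hQ3, hQ4, hQ5, hX5e, Finset.prod_empty] at hP
            norm_num at hP

        -- d4 = 12
        have hf12 : (12:ℕ).factorization 2 = 2 := by
          rw [show (12:ℕ) = 2^2*3 by norm_num]; exact fact2_pow_mul (by norm_num)
        have hd5ge : 13 ≤ d5 := hgt4 d5 hd5X
        by_cases hc5 : 46 ≤ d5
        · have hge : ∀ d ∈ X4, 46 ≤ d := fun d hd => le_trans hc5 (hmin4 d hd)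
          have hub46 := KB X4 46 hX4c hall4 hge
          have hkey : (2:ℚ) - 2/2^11 ≤
              (9/8) * ((1+1/((4:ℕ):ℚ)) * ((1+1/((6:ℕ):ℚ)) * ((1+1/((10:ℕ):ℚ)) *
                ((1+1/((12:ℕ):ℚ)) * bnd 1 46)))) := by
            calc (2:ℚ) - 2/2^11 ≤ 2 - 2/2^a := target_mono (by omega)
            _ = 9/8 * ∏ d ∈ D, (1 + 1/(d:ℚ)) := hP.symm
            _ = 9/8 * ((1+1/((4:ℕ):ℚ)) * ((1+1/((6:ℕ):ℚ)) * ((1+1/((10:ℕ):ℚ)) *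
                ((1+1/((12:ℕ):ℚ)) * ∏ d ∈ X4, (1 + 1/(d:ℚ)))))) := by
              rw [hQ1, hQ2, hQ3, hQ4]
            _ ≤ _ := by gcongr
          norm_num [bnd, na] at hkey
        have hd5v : d5 = 16 ∨ d5 = 18 ∨ d5 = 22 ∨ d5 = 24 ∨ d5 = 28 ∨ d5 = 30 ∨ d5 = 34 ∨ d5 = 36 ∨ d5 = 40 ∨ d5 = 42 := by
          obtain ⟨x1, x2, x3⟩ := hall4 d5 hd5X
          omega
        rcases hd5v with rfl|rfl|rfl|rfl|rfl|rfl|rfl|rfl|rfl|rfl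
        · have hfd5 : (16:ℕ).factorization 2 = 4 := by
            rw [show (16:ℕ) = 2^4*1 by norm_num]; exact fact2_pow_mul (by norm_num)
          have hav : a = 14 := by omega
          rw [hav, hQ1, hQ2, hQ3, hQ4, hQ5, hX5e, Finset.prod_empty] at hP
          norm_num at hP
        · have hfd5 : (18:ℕ).factorization 2 = 1 := by
            rw [show (18:ℕ) = 2^1*9 by norm_num]; exact fact2_pow_mul (by norm_num)
          have hav : a = 11 := by omega
          rw [hav, hQ1, hQ2, hQ3, hQ4, hQ5, hX5e, Finset.prod_empty] at hP
          norm_num at hP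
        · have hfd5 : (22:ℕ).factorization 2 = 1 := by
            rw [show (22:ℕ) = 2^1*11 by norm_num]; exact fact2_pow_mul (by norm_num)
          have hav : a = 11 := by omega
          rw [hav, hQ1, hQ2, hQ3, hQ4, hQ5, hX5e, Finset.prod_empty] at hP
          norm_num at hP
        · have hfd5 : (24:ℕ).factorization 2 = 3 := by
            rw [show (24:ℕ) = 2^3*3 by norm_num]; exact fact2_pow_mul (by norm_num)
          have hav : a = 13 := by omega
          rw [hav, hQ1, hQ2, hQ3, hQ4, hQ5, hX5e, Finset.prod_empty] at hP
          norm_num at hP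
        · have hfd5 : (28:ℕ).factorization 2 = 2 := by
            rw [show (28:ℕ) = 2^2*7 by norm_num]; exact fact2_pow_mul (by norm_num)
          have hav : a = 12 := by omega
          rw [hav, hQ1, hQ2, hQ3, hQ4, hQ5, hX5e, Finset.prod_empty] at hP
          norm_num at hP
        · have hfd5 : (30:ℕ).factorization 2 = 1 := by
            rw [show (30:ℕ) = 2^1*15 by norm_num]; exact fact2_pow_mul (by norm_num)
          have hav : a = 11 := by omega
          rw [hav, hQ1, hQ2, hQ3, hQ4, hQ5, hX5e, Finset.prod_empty] at hP
          norm_num at hP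
        · have hfd5 : (34:ℕ).factorization 2 = 1 := by
            rw [show (34:ℕ) = 2^1*17 by norm_num]; exact fact2_pow_mul (by norm_num)
          have hav : a = 11 := by omega
          rw [hav, hQ1, hQ2, hQ3, hQ4, hQ5, hX5e, Finset.prod_empty] at hP
          norm_num at hP
        · have hfd5 : (36:ℕ).factorization 2 = 2 := by
            rw [show (36:ℕ) = 2^2*9 by norm_num]; exact fact2_pow_mul (by norm_num)
          have hav : a = 12 := by omega
          rw [hav, hQ1, hQ2, hQ3, hQ4, hQ5, hX5e, Finset.prod_empty] at hP
          norm_num at hP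
        · have hfd5 : (40:ℕ).factorization 2 = 3 := by
            rw [show (40:ℕ) = 2^3*5 by norm_num]; exact fact2_pow_mul (by norm_num)
          have hav : a = 13 := by omega
          rw [hav, hQ1, hQ2, hQ3, hQ4, hQ5, hX5e, Finset.prod_empty] at hP
          norm_num at hP
        · have hfd5 : (42:ℕ).factorization 2 = 1 := by
            rw [show (42:ℕ) = 2^1*21 by norm_num]; exact fact2_pow_mul (by norm_num)
          have hav : a = 11 := by omega
          rw [hav, hQ1, hQ2, hQ3, hQ4, hQ5, hX5e, Finset.prod_empty] at hP
          norm_num at hP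

      · -- k ≤ 4
        have hamin : 4 + D.card ≤ a := by omega
        have hkey : (2:ℚ) - 2/2^(4 + D.card) ≤ (9/8) * bnd D.card 4 := by
          calc (2:ℚ) - 2/2^(4 + D.card) ≤ 2 - 2/2^a := target_mono hamin
          _ = 9/8 * ∏ d ∈ D, (1 + 1/(d:ℚ)) := hP.symm
          _ ≤ (9/8) * bnd D.card 4 :=
            mul_le_mul (le_refl _) hub hQnn (by norm_num)
        have hk4 : D.card ≤ 4 := by omega
        obtain ⟨k, hkk⟩ : ∃ k, D.card = k := ⟨_, rfl⟩
        rw [hkk] at hkey hk4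
        interval_cases k <;> norm_num [bnd, na] at hkey
  · -- e odd (≥ 3) : v₂(3^e-1) = 1, f3 ≤ 27/26
    obtain ⟨j, hj⟩ := hodd
    have h4 : 3^e % 4 = 3 := by
      have h9j : (9:ℕ)^j % 4 = 1 := by
        rw [Nat.pow_mod]; norm_num
      have : (3:ℕ)^e = 9^j * 3 := by
        rw [hj, pow_succ, pow_mul]; norm_num
      omega
    have hw1 : (3^e - 1).factorization 2 = 1 := by
      have hdecomp : 3^e - 1 = 2^1 * ((3^e - 1)/2) := by omega
      have hodd' : ((3^e - 1)/2) % 2 = 1 := by omega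
      rw [hdecomp, fact2_pow_mul hodd']
    have he3 : 3 ≤ e := by omega
    have hM27 : (27:ℚ) ≤ (3:ℚ)^e := by
      have : (27:ℕ) ≤ 3^e := by
        calc (27:ℕ) = 3^3 := rfl
        _ ≤ 3^e := Nat.pow_le_pow_right (by norm_num) he3
      exact_mod_cast this
    have hf3 : (3:ℚ)^e / ((3:ℚ)^e - 1) ≤ 27/26 := by
      rw [div_le_div_iff₀ (by linarith) (by norm_num)]
      nlinarith
    have hamin : 2 + D.card ≤ a := by omega
    have hkey : (2:ℚ) - 2/2^(2 + D.card) ≤ (27/26) * bnd D.card 4 := by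
      calc (2:ℚ) - 2/2^(2 + D.card) ≤ 2 - 2/2^a := target_mono hamin
      _ = (3:ℚ)^e / ((3:ℚ)^e - 1) * ∏ d ∈ D, (1 + 1/(d:ℚ)) := hP.symm
      _ ≤ (27/26) * bnd D.card 4 :=
        mul_le_mul hf3 hub hQnn (by norm_num)
    obtain ⟨k, hkk⟩ : ∃ k, D.card = k := ⟨_, rfl⟩
    rw [hkk] at hkey hk
    interval_cases k <;> norm_num [bnd, na] at hkey

theorem stmt13 (N : ℕ) (hN : N = 2 * uphi N)
    (hω : N.primeFactors.card ≤ 7)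
    (hne : N ∉ ({1, 2, 6, 12, 168, 240} : Set ℕ)) :
    3 ∣ N ∧ ¬ 9 ∣ N := by
  have hN0 : N ≠ 0 := by
    intro h; rw [h] at hN; simp [uphi] at hN
  have hprod : ∏ p ∈ N.primeFactors, p ^ N.factorization p = N := by
    conv_rhs => rw [← Nat.factorization_prod_pow_eq_self hN0]
    rw [Finsupp.prod, Nat.support_factorization]
  have hFpos : ∀ p ∈ N.primeFactors, N.factorization p ≠ 0 := by
    intro p hp
    rw [← Nat.support_factorization] at hp
    exact Finsupp.mem_support_iff.mp hp
  have hq2 : ∀ p ∈ N.primeFactors, 2 ≤ p ^ N.factorization p := fun p hp =>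
    le_trans (Nat.prime_of_mem_primeFactors hp).two_le
      (Nat.le_self_pow (hFpos p hp) p)
  have huphi0 : uphi N ≠ 0 := by
    unfold uphi
    have : 0 < ∏ p ∈ N.primeFactors, (p ^ N.factorization p - 1) :=
      Finset.prod_pos fun p hp => by have := hq2 p hp; omega
    omega
  have h2S : 2 ∈ N.primeFactors :=
    Nat.mem_primeFactors.mpr ⟨Nat.prime_two, ⟨uphi N, hN⟩, hN0⟩
  have hfa : N.factorization 2 =
      1 + ∑ p ∈ N.primeFactors, (p ^ N.factorization p - 1).factorization 2 := by
    conv_lhs => rw [hN]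
    rw [Nat.factorization_mul two_ne_zero huphi0]
    have h1 : (Nat.factorization 2) 2 = 1 := by
      simp [Nat.Prime.factorization_self Nat.prime_two]
    have h2 : (uphi N).factorization =
        ∑ p ∈ N.primeFactors, ((p ^ N.factorization p - 1).factorization) := by
      unfold uphi
      exact Nat.factorization_prod fun p hp => by have := hq2 p hp; omega
    rw [Finsupp.add_apply, h1, h2, Finset.sum_apply']
  have hapos : 1 ≤ N.factorization 2 := by
    have := hFpos 2 h2S; omega
  have h2a_even : (2:ℕ)^(N.factorization 2) % 2 = 0 := by
    obtain ⟨b, hb⟩ : ∃ b, N.factorization 2 = b + 1 := ⟨N.factorization 2 - 1, by omega⟩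
    rw [hb, pow_succ]
    omega
  have h2a2 : 2 ≤ 2^(N.factorization 2) :=
    le_trans (by norm_num) (Nat.pow_le_pow_right (by norm_num) hapos)
  have hodd2a : (2^(N.factorization 2) - 1).factorization 2 = 0 :=
    fact2_odd (by omega)
  -- step 1 : 3 ∈ primeFactors
  have h3S : 3 ∈ N.primeFactors := by
    by_contra h3
    have hTfacts : ∀ p ∈ N.primeFactors.erase 2,
        p.Prime ∧ p ≠ 2 ∧ p ≠ 3 ∧ 1 ≤ N.factorization p := by
      intro p hp
      obtain ⟨hne2, hpS⟩ := Finset.mem_erase.mp hp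
      refine ⟨Nat.prime_of_mem_primeFactors hpS, hne2, ?_, by have := hFpos p hpS; omega⟩
      intro h; exact h3 (h ▸ hpS)
    obtain ⟨D, hDcard, hDall, hDp1, hDp0, hDs⟩ :=
      bridge (N.primeFactors.erase 2) N.factorization hTfacts
    have hsplitq : ∏ p ∈ N.primeFactors, p ^ N.factorization p =
        2 ^ N.factorization 2 * ∏ p ∈ N.primeFactors.erase 2, p ^ N.factorization p :=
      (Finset.mul_prod_erase N.primeFactors _ h2S).symm
    have hsplitd : ∏ p ∈ N.primeFactors, (p ^ N.factorization p - 1) =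
        (2 ^ N.factorization 2 - 1) *
          ∏ p ∈ N.primeFactors.erase 2, (p ^ N.factorization p - 1) :=
      (Finset.mul_prod_erase N.primeFactors _ h2S).symm
    have hEqA : 2 ^ N.factorization 2 * ∏ d ∈ D, (d+1) =
        2 * ((2 ^ N.factorization 2 - 1) * ∏ d ∈ D, d) := by
      rw [← hDp1, ← hDp0, ← hsplitq, ← hsplitd, hprod]
      conv_lhs => rw [hN]
      rfl
    have haA : N.factorization 2 = 1 + ∑ d ∈ D, d.factorization 2 := by
      rw [hfa, ← Finset.add_sum_erase _ _ h2S, hodd2a, zero_add, hDs]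
    have hcard6 : D.card ≤ 6 := by
      rw [hDcard, Finset.card_erase_of_mem h2S]; omega
    by_cases hD0 : D.card = 0
    · have hDe : D = ∅ := Finset.card_eq_zero.mp hD0
      subst hDe
      simp only [Finset.prod_empty, mul_one] at hEqA
      have h2av : 2 ^ N.factorization 2 = 2 := by omega
      have hNv : N = 2 := by
        rw [← hprod, hsplitq]
        have hTe : N.primeFactors.erase 2 = ∅ := by
          rw [Finset.card_empty] at hDcard
          exact Finset.card_eq_zero.mp hDcard.symm
        rw [hTe, Finset.prod_empty, mul_one, h2av]
      rw [hNv] at hne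
      simp at hne
    · exact scenarioA D (N.factorization 2) hcard6 (by omega) hDall haA hEqA
  refine ⟨Nat.dvd_of_mem_primeFactors h3S, ?_⟩
  intro h9
  have he2 : 2 ≤ N.factorization 3 := by
    rw [← Nat.Prime.pow_dvd_iff_le_factorization Nat.prime_three hN0]
    exact (show (3:ℕ)^2 = 9 by norm_num) ▸ h9
  have h3T : 3 ∈ N.primeFactors.erase 2 := Finset.mem_erase.mpr ⟨by norm_num, h3S⟩
  have hTfacts : ∀ p ∈ (N.primeFactors.erase 2).erase 3,
      p.Prime ∧ p ≠ 2 ∧ p ≠ 3 ∧ 1 ≤ N.factorization p := by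
    intro p hp
    obtain ⟨hne3, hp2⟩ := Finset.mem_erase.mp hp
    obtain ⟨hne2, hpS⟩ := Finset.mem_erase.mp hp2
    exact ⟨Nat.prime_of_mem_primeFactors hpS, hne2, hne3, by have := hFpos p hpS; omega⟩
  obtain ⟨D, hDcard, hDall, hDp1, hDp0, hDs⟩ :=
    bridge ((N.primeFactors.erase 2).erase 3) N.factorization hTfacts
  have e1 := Finset.mul_prod_erase (N.primeFactors.erase 2)
    (fun p => p ^ N.factorization p) h3T
  have e2 := Finset.mul_prod_erase N.primeFactors
    (fun p => p ^ N.factorization p) h2S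
  have e3 := Finset.mul_prod_erase (N.primeFactors.erase 2)
    (fun p => p ^ N.factorization p - 1) h3T
  have e4 := Finset.mul_prod_erase N.primeFactors
    (fun p => p ^ N.factorization p - 1) h2S
  have hsplitq : ∏ p ∈ N.primeFactors, p ^ N.factorization p =
      2 ^ N.factorization 2 * (3 ^ N.factorization 3 *
        ∏ p ∈ (N.primeFactors.erase 2).erase 3, p ^ N.factorization p) := by
    rw [e1, e2]
  have hsplitd : ∏ p ∈ N.primeFactors, (p ^ N.factorization p - 1) =
      (2 ^ N.factorization 2 - 1) * ((3 ^ N.factorization 3 - 1) *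
        ∏ p ∈ (N.primeFactors.erase 2).erase 3, (p ^ N.factorization p - 1)) := by
    rw [e3, e4]
  have hEqB : 2 ^ N.factorization 2 * (3 ^ N.factorization 3 * ∏ d ∈ D, (d+1)) =
      2 * ((2 ^ N.factorization 2 - 1) * ((3 ^ N.factorization 3 - 1) * ∏ d ∈ D, d)) := by
    rw [← hDp1, ← hDp0, ← hsplitq, ← hsplitd, hprod]
    conv_lhs => rw [hN]
    rfl
  have haB : N.factorization 2 = 1 + ((3 ^ N.factorization 3 - 1).factorization 2 +
      ∑ d ∈ D, d.factorization 2) := by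
    rw [hfa, ← Finset.add_sum_erase _ _ h2S, hodd2a, zero_add,
      ← Finset.add_sum_erase _ _ h3T, hDs]
  have hcard5 : D.card ≤ 5 := by
    rw [hDcard, Finset.card_erase_of_mem h3T, Finset.card_erase_of_mem h2S]; omega
  exact scenarioB D (N.factorization 2) (N.factorization 3) he2 hcard5 hDall haB hEqB
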